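/- Let n ≥ 1 be a natural number, let a, τ ∈ ℝ with a ≥ 0 and τ ≥ 2, and let W be an n×n complex matrix such that, with V = Wᴴ (the conjugate transpose), the relations W·W·V = a•W − V·W·W + τ•(W·V·W) and W·V·V = a•V − V·V·W + τ•(V·W·V) hold (the C_{L,a}-relations with det A = 1). Assume the representation is irreducible: every subspace U of ℂⁿ with W·U ⊆ U and Wᴴ·U ⊆ U satisfies U = {0} or U = ℂⁿ. Then n = 1. -/
import Mathlib

open scoped Matrix
open Matrix


lemma trace_star_mul_self {n : ℕ} (A : Matrix (Fin n) (Fin n) ℂ) :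
    trace (Aᴴ * A) = ((∑ i, ∑ j, Complex.normSq (A i j) : ℝ) : ℂ) := by
  rw [Matrix.trace]
  push_cast
  rw [Finset.sum_comm]
  refine Finset.sum_congr rfl fun j _ => ?_
  rw [Matrix.diag_apply, Matrix.mul_apply]
  refine Finset.sum_congr rfl fun i _ => ?_
  rw [Matrix.conjTranspose_apply, Complex.normSq_eq_conj_mul_self]
  rfl

lemma eq_zero_of_sum_normSq {n : ℕ} (A : Matrix (Fin n) (Fin n) ℂ)
    (h : ∑ i, ∑ j, Complex.normSq (A i j) = 0) : A = 0 := by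
  ext i j
  have h1 := (Finset.sum_eq_zero_iff_of_nonneg
    (fun i _ => Finset.sum_nonneg fun j _ => Complex.normSq_nonneg (A i j))).mp h i
      (Finset.mem_univ i)
  have h2 := (Finset.sum_eq_zero_iff_of_nonneg
    (fun j _ => Complex.normSq_nonneg (A i j))).mp h1 j (Finset.mem_univ j)
  simpa using Complex.normSq_eq_zero.mp h2

lemma normal_of_rel {n : ℕ} (W : Matrix (Fin n) (Fin n) ℂ) (a τ : ℝ) (ha : 0 ≤ a) (hτ : 2 ≤ τ)
    (h1 : W * W * Wᴴ = a • W - Wᴴ * W * W + τ • (W * Wᴴ * W)) :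
    W * Wᴴ = Wᴴ * W := by
  set p : ℂ := trace (Wᴴ * W) with hp
  set t1 : ℂ := trace (W * W * Wᴴ * Wᴴ) with ht1
  set p2 : ℂ := trace (Wᴴ * W * (Wᴴ * W)) with hp2
  set q2 : ℂ := trace (W * Wᴴ * (W * Wᴴ)) with hq2
  have c1 : trace (Wᴴ * (W * W * Wᴴ)) = t1 := trace_mul_comm _ _
  have c2 : trace (Wᴴ * (Wᴴ * W * W)) = t1 := by
    rw [show Wᴴ * (Wᴴ * W * W) = Wᴴ * Wᴴ * (W * W) by noncomm_ring, trace_mul_comm, ht1]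
    congr 1; noncomm_ring
  have c3 : trace (Wᴴ * (W * Wᴴ * W)) = p2 := by
    rw [show Wᴴ * (W * Wᴴ * W) = Wᴴ * W * (Wᴴ * W) by noncomm_ring]
  have e1 : (2 : ℂ) * t1 = (a : ℂ) * p + (τ : ℂ) * p2 := by
    have h := congrArg (fun M => trace (Wᴴ * M)) h1
    simp only [mul_sub, mul_add, Matrix.mul_smul, trace_sub, trace_add, trace_smul,
      Complex.real_smul] at h
    rw [c1, c2, c3, ← hp] at h
    linear_combination h
  have e2 : (2 : ℂ) * t1 = (a : ℂ) * p + (τ : ℂ) * q2 := by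
    have h := congrArg (fun M => trace (M * Wᴴ)) h1
    simp only [sub_mul, add_mul, Matrix.smul_mul, trace_sub, trace_add, trace_smul,
      Complex.real_smul] at h
    rw [show trace (W * Wᴴ) = p from trace_mul_comm _ _,
        show trace (Wᴴ * W * W * Wᴴ) = t1 by
          rw [show Wᴴ * W * W * Wᴴ = Wᴴ * (W * W * Wᴴ) by noncomm_ring, c1],
        show trace (W * Wᴴ * W * Wᴴ) = q2 by
          rw [show W * Wᴴ * W * Wᴴ = W * Wᴴ * (W * Wᴴ) by noncomm_ring]] at h
    linear_combination h
  have hτ0 : (τ : ℂ) ≠ 0 := by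
    simp only [ne_eq, Complex.ofReal_eq_zero]; linarith
  have hpq : p2 = q2 := mul_left_cancel₀ hτ0 (by linear_combination e2 - e1)
  set S : Matrix (Fin n) (Fin n) ℂ := W * Wᴴ - Wᴴ * W with hS
  have hSh : Sᴴ = S := by
    simp [hS, Matrix.conjTranspose_sub, Matrix.conjTranspose_mul]
  have tS : trace (Sᴴ * S) = ((2 : ℂ) - τ) * p2 - (a : ℂ) * p := by
    rw [hSh, hS]
    simp only [Matrix.sub_mul, Matrix.mul_sub, trace_sub]
    rw [show trace (W * Wᴴ * (Wᴴ * W)) = t1 by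
          rw [trace_mul_comm, show Wᴴ * W * (W * Wᴴ) = Wᴴ * (W * W * Wᴴ) by noncomm_ring, c1],
        show trace (Wᴴ * W * (W * Wᴴ)) = t1 by
          rw [show Wᴴ * W * (W * Wᴴ) = Wᴴ * (W * W * Wᴴ) by noncomm_ring, c1],
        ← hp2, ← hq2, hpq]
    linear_combination (-1:ℂ) * e2
  -- pass to real parts
  have hPh : (Wᴴ * W)ᴴ = Wᴴ * W := by simp [Matrix.conjTranspose_mul]
  have hp2' : p2 = ((∑ i, ∑ j, Complex.normSq ((Wᴴ * W) i j) : ℝ) : ℂ) := by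
    rw [hp2, ← trace_star_mul_self (Wᴴ * W), hPh]
  have hp' : p = ((∑ i, ∑ j, Complex.normSq (W i j) : ℝ) : ℂ) := trace_star_mul_self W
  have hs' : trace (Sᴴ * S) = ((∑ i, ∑ j, Complex.normSq (S i j) : ℝ) : ℂ) :=
    trace_star_mul_self S
  set rs : ℝ := ∑ i, ∑ j, Complex.normSq (S i j)
  set rp : ℝ := ∑ i, ∑ j, Complex.normSq (W i j)
  set rp2 : ℝ := ∑ i, ∑ j, Complex.normSq ((Wᴴ * W) i j)
  have key : (rs : ℂ) = ((2 - τ) * rp2 - a * rp : ℝ) := by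
    rw [← hs', tS, hp2', hp']; push_cast; ring
  have keyR : rs = (2 - τ) * rp2 - a * rp := by exact_mod_cast key
  have hrs0 : rs = 0 := by
    have h1 : 0 ≤ rs := Finset.sum_nonneg fun _ _ => Finset.sum_nonneg fun _ _ =>
      Complex.normSq_nonneg _
    have h2 : 0 ≤ rp := Finset.sum_nonneg fun _ _ => Finset.sum_nonneg fun _ _ =>
      Complex.normSq_nonneg _
    have h3 : 0 ≤ rp2 := Finset.sum_nonneg fun _ _ => Finset.sum_nonneg fun _ _ =>
      Complex.normSq_nonneg _
    nlinarith
  have : S = 0 := eq_zero_of_sum_normSq S hrs0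
  rw [hS] at this
  linear_combination (norm := abel) this

lemma dim_one {n : ℕ} (hn : 1 ≤ n) (W : Matrix (Fin n) (Fin n) ℂ)
    (hcomm : W * Wᴴ = Wᴴ * W)
    (hirr : ∀ U : Submodule ℂ (Fin n → ℂ),
      (∀ x ∈ U, W.mulVec x ∈ U) → (∀ x ∈ U, Wᴴ.mulVec x ∈ U) →
      U = ⊥ ∨ U = ⊤) :
    n = 1 := by
  haveI : NeZero n := ⟨by omega⟩
  haveI : Nontrivial (Fin n → ℂ) := by
    have : Nonempty (Fin n) := Fin.pos_iff_nonempty.mp (by omega)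
    infer_instance
  have hfg : ∀ x, W.mulVecLin (Wᴴ.mulVecLin x) = Wᴴ.mulVecLin (W.mulVecLin x) := by
    intro x
    simp only [Matrix.mulVecLin_apply, Matrix.mulVec_mulVec]
    rw [hcomm]
  obtain ⟨μ, hμ⟩ := Module.End.exists_eigenvalue W.mulVecLin
  have hgE : ∀ x ∈ Module.End.eigenspace W.mulVecLin μ, Wᴴ.mulVecLin x ∈ Module.End.eigenspace W.mulVecLin μ := by
    intro x hx
    rw [Module.End.mem_eigenspace_iff] at hx ⊢
    rw [hfg, hx, _root_.map_smul]
  haveI : Nontrivial (Module.End.eigenspace W.mulVecLin μ) := Submodule.nontrivial_iff_ne_bot.mpr hμ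
  obtain ⟨ν, hν⟩ := Module.End.exists_eigenvalue (Wᴴ.mulVecLin.restrict hgE)
  obtain ⟨w, hw⟩ := hν.exists_hasEigenvector
  have hv0 : (w : Fin n → ℂ) ≠ 0 := fun h => hw.2 (by exact_mod_cast Subtype.ext h)
  have hWv : W.mulVec (w : Fin n → ℂ) = μ • (w : Fin n → ℂ) := by
    have := Module.End.mem_eigenspace_iff.mp w.2
    simpa [Matrix.mulVecLin_apply] using this
  have hWHv : Wᴴ.mulVec (w : Fin n → ℂ) = ν • (w : Fin n → ℂ) := by
    have h := hw.apply_eq_smul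
    have h2 : ((Wᴴ.mulVecLin.restrict hgE w : _) : Fin n → ℂ) = ((ν • w : _) : Fin n → ℂ) := by
      rw [h]
    simpa [LinearMap.restrict_apply, Matrix.mulVecLin_apply] using h2
  have hU1 : ∀ x ∈ (ℂ ∙ (w : Fin n → ℂ)), W.mulVec x ∈ (ℂ ∙ (w : Fin n → ℂ)) := by
    intro x hx
    obtain ⟨c, rfl⟩ := Submodule.mem_span_singleton.mp hx
    rw [Matrix.mulVec_smul, hWv]
    exact Submodule.smul_mem _ _ (Submodule.smul_mem _ _ (Submodule.mem_span_singleton_self _))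
  have hU2 : ∀ x ∈ (ℂ ∙ (w : Fin n → ℂ)), Wᴴ.mulVec x ∈ (ℂ ∙ (w : Fin n → ℂ)) := by
    intro x hx
    obtain ⟨c, rfl⟩ := Submodule.mem_span_singleton.mp hx
    rw [Matrix.mulVec_smul, hWHv]
    exact Submodule.smul_mem _ _ (Submodule.smul_mem _ _ (Submodule.mem_span_singleton_self _))
  rcases hirr _ hU1 hU2 with h | h
  · exfalso
    apply hv0
    have := Submodule.mem_span_singleton_self (R := ℂ) (w : Fin n → ℂ)
    rw [h] at this
    simpa using this
  · have h1 : Module.finrank ℂ (ℂ ∙ (w : Fin n → ℂ)) = 1 := finrank_span_singleton hv0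
    rw [h, finrank_top] at h1
    simpa using h1

/-- an irreducible finite-dimensional ∗-representation of `C_{L,a}`
with `det A = 1`, `a ≥ 0` and `tr A = τ ≥ 2` is one-dimensional. -/
theorem stmt_11 (n : ℕ) (hn : 1 ≤ n) (a τ : ℝ) (ha : 0 ≤ a) (hτ : 2 ≤ τ)
    (W : Matrix (Fin n) (Fin n) ℂ)
    (h1 : W * W * Wᴴ = a • W - Wᴴ * W * W + τ • (W * Wᴴ * W))
    (h2 : W * Wᴴ * Wᴴ = a • Wᴴ - Wᴴ * Wᴴ * W + τ • (Wᴴ * W * Wᴴ))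
    (hirr : ∀ U : Submodule ℂ (Fin n → ℂ),
      (∀ x ∈ U, W.mulVec x ∈ U) → (∀ x ∈ U, Wᴴ.mulVec x ∈ U) →
      U = ⊥ ∨ U = ⊤) :
    n = 1 :=
  dim_one hn W (normal_of_rel W a τ ha hτ h1) hirr
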